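/- If a real polynomial p of degree n is nonnegative on [-1,1] and has no zeros in the closed complex unit disk, then p can be written as p(x) = Σ_{k=0}^n a_k (1-x)^k (1+x)^{n-k} with all a_k ≥ 0; i.e., its Lorentz degree equals its ordinary degree (Lorentz's theorem). -/

import Mathlib

open Polynomial Finset

noncomputable def T (n : ℕ) (A : ℝ[X]) : ℝ[X] :=
  ∑ k ∈ range (n+1), C (A.coeff k) * (1 - X)^k * (1 + X)^(n-k)

lemma eval_T {x : ℝ} (hx : 1 + x ≠ 0) {n : ℕ} {A : ℝ[X]} (hA : A.natDegree ≤ n) :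
    (T n A).eval x = (1+x)^n * A.eval ((1-x)/(1+x)) := by
  rw [Polynomial.eval_eq_sum_range' (lt_of_le_of_lt hA (Nat.lt_succ_self n))]
  rw [T]
  simp only [eval_finset_sum, eval_mul, eval_pow, eval_add, eval_sub, eval_one, eval_X, eval_C]
  rw [Finset.mul_sum]
  refine Finset.sum_congr rfl fun k hk => ?_
  have hk' : k ≤ n := Nat.lt_succ_iff.mp (Finset.mem_range.mp hk)
  rw [pow_sub₀ _ hx hk', div_pow]
  field_simp

lemma T_mul {m n : ℕ} {A B : ℝ[X]} (hA : A.natDegree ≤ m) (hB : B.natDegree ≤ n) :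
    T m A * T n B = T (m+n) (A*B) := by
  apply Polynomial.eq_of_infinite_eval_eq
  apply Set.Infinite.mono (s := {x : ℝ | x ≠ -1})
  · intro x hx
    have hx' : (1:ℝ) + x ≠ 0 := fun h => hx (by linarith)
    have hAB : (A*B).natDegree ≤ m + n := le_trans natDegree_mul_le (add_le_add hA hB)
    simp only [Set.mem_setOf_eq, eval_mul, eval_T hx' hA, eval_T hx' hB, eval_T hx' hAB,
      eval_mul, pow_add]
    ring
  · exact Set.Finite.infinite_compl (Set.finite_singleton (-1))

lemma T_lin (a0 a1 : ℝ) : T 1 (C a0 + C a1 * X) = C (a0 + a1) + C (a0 - a1) * X := by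
  simp [T, Finset.sum_range_succ, coeff_add, coeff_C, coeff_C_mul, coeff_X]
  ring_nf

lemma T_quad (a0 a1 a2 : ℝ) : T 2 (C a0 + C a1 * X + C a2 * X^2) =
    C (a0 - a1 + a2) * X^2 + C (2*a0 - 2*a2) * X + C (a0 + a1 + a2) := by
  simp [T, Finset.sum_range_succ, coeff_add, coeff_C, coeff_C_mul, coeff_X, coeff_X_pow]
  push_cast [map_add, map_sub, map_mul, map_ofNat]
  ring

lemma coeff_lin_nonneg {a0 a1 : ℝ} (h0 : 0 ≤ a0) (h1 : 0 ≤ a1) (k : ℕ) :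
    0 ≤ (C a0 + C a1 * X : ℝ[X]).coeff k := by
  match k with
  | 0 => simpa [coeff_add, coeff_C, coeff_C_mul] using h0
  | 1 => simpa [coeff_add, coeff_C, coeff_C_mul] using h1
  | (n+2) => simp [coeff_add, coeff_C, coeff_C_mul]

lemma coeff_quad_nonneg {a0 a1 a2 : ℝ} (h0 : 0 ≤ a0) (h1 : 0 ≤ a1) (h2 : 0 ≤ a2) (k : ℕ) :
    0 ≤ (C a0 + C a1 * X + C a2 * X^2 : ℝ[X]).coeff k := by
  match k with
  | 0 => simpa [coeff_add, coeff_C, coeff_C_mul, coeff_X_pow] using h0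
  | 1 => simpa [coeff_add, coeff_C, coeff_C_mul, coeff_X_pow] using h1
  | 2 => simpa [coeff_add, coeff_C, coeff_C_mul, coeff_X_pow] using h2
  | (n+3) => simp [coeff_add, coeff_C, coeff_C_mul, coeff_X_pow]

lemma repLinPos {r : ℝ} (hr : 1 < r) :
    ∃ A : ℝ[X], (∀ k, 0 ≤ A.coeff k) ∧ A.natDegree ≤ 1 ∧ C r - X = T 1 A := by
  refine ⟨C ((r-1)/2) + C ((r+1)/2) * X,
    coeff_lin_nonneg (by linarith) (by linarith), by compute_degree, ?_⟩
  rw [T_lin, show (r-1)/2 + (r+1)/2 = r from by ring, show (r-1)/2 - (r+1)/2 = -1 from by ring]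
  simp [map_neg]
  ring

lemma repLinNeg {r : ℝ} (hr : r < -1) :
    ∃ A : ℝ[X], (∀ k, 0 ≤ A.coeff k) ∧ A.natDegree ≤ 1 ∧ X - C r = T 1 A := by
  refine ⟨C ((-r+1)/2) + C ((-r-1)/2) * X,
    coeff_lin_nonneg (by linarith) (by linarith), by compute_degree, ?_⟩
  rw [T_lin, show (-r+1)/2 + (-r-1)/2 = -r from by ring, show (-r+1)/2 - (-r-1)/2 = 1 from by ring]
  simp [map_neg]
  ring

lemma repQuad {r s : ℝ} (h1 : 1 ≤ s) (hL : 0 ≤ 1 - 2*r + s) (hR : 0 ≤ 1 + 2*r + s) :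
    ∃ A : ℝ[X], (∀ k, 0 ≤ A.coeff k) ∧ A.natDegree ≤ 2 ∧
      X^2 - C (2*r) * X + C s = T 2 A := by
  refine ⟨C ((1-2*r+s)/4) + C ((s-1)/2) * X + C ((1+2*r+s)/4) * X^2,
    coeff_quad_nonneg (by linarith) (by linarith) (by linarith), by compute_degree, ?_⟩
  rw [T_quad,
    show (1-2*r+s)/4 - (s-1)/2 + (1+2*r+s)/4 = 1 from by ring,
    show 2*((1-2*r+s)/4) - 2*((1+2*r+s)/4) = -(2*r) from by ring,
    show (1-2*r+s)/4 + (s-1)/2 + (1+2*r+s)/4 = s from by ring]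
  simp [map_neg]
  ring

lemma coeff_mul_nonneg {A B : ℝ[X]} (hA : ∀ k, 0 ≤ A.coeff k) (hB : ∀ k, 0 ≤ B.coeff k) :
    ∀ k, 0 ≤ (A*B).coeff k := fun k => by
  rw [coeff_mul]
  exact Finset.sum_nonneg fun x _ => mul_nonneg (hA _) (hB _)

lemma p_ne_zero {p : ℝ[X]}
    (hz : ∀ z : ℂ, ‖z‖ ≤ 1 → (p.map (algebraMap ℝ ℂ)).eval z ≠ 0) : p ≠ 0 := by
  intro h
  exact hz 0 (by simp) (by simp [h])

lemma combine {p f : ℝ[X]} {n d : ℕ} (hdeg : p.natDegree = n)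
    (hpos : ∀ x ∈ Set.Icc (-1 : ℝ) 1, 0 ≤ p.eval x)
    (hz : ∀ z : ℂ, ‖z‖ ≤ 1 → (p.map (algebraMap ℝ ℂ)).eval z ≠ 0)
    (hdvd : f ∣ p) (hfd : f.natDegree = d) (hd : 0 < d)
    (hfpos : ∀ x ∈ Set.Icc (-1 : ℝ) 1, 0 < f.eval x)
    (hfz : ∀ z : ℂ, ‖z‖ ≤ 1 → (f.map (algebraMap ℝ ℂ)).eval z ≠ 0)
    (hrep : ∃ Af : ℝ[X], (∀ k, 0 ≤ Af.coeff k) ∧ Af.natDegree ≤ d ∧ f = T d Af)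
    (IH : ∀ m, m < n → ∀ q : ℝ[X], q.natDegree = m →
      (∀ x ∈ Set.Icc (-1 : ℝ) 1, 0 ≤ q.eval x) →
      (∀ z : ℂ, ‖z‖ ≤ 1 → (q.map (algebraMap ℝ ℂ)).eval z ≠ 0) →
      ∃ A : ℝ[X], (∀ k, 0 ≤ A.coeff k) ∧ A.natDegree ≤ m ∧ q = T m A) :
    ∃ A : ℝ[X], (∀ k, 0 ≤ A.coeff k) ∧ A.natDegree ≤ n ∧ p = T n A := by
  obtain ⟨q, hpq⟩ := hdvd
  have hp0 : p ≠ 0 := p_ne_zero hz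
  have hf0 : f ≠ 0 := fun h => by simp [h] at hfd; omega
  have hq0 : q ≠ 0 := fun h => hp0 (by rw [hpq, h, mul_zero])
  have hnd : n = d + q.natDegree := by
    rw [← hdeg, hpq, natDegree_mul hf0 hq0, hfd]
  have hqpos : ∀ x ∈ Set.Icc (-1 : ℝ) 1, 0 ≤ q.eval x := by
    intro x hx
    have h1 := hpos x hx
    rw [hpq, eval_mul] at h1
    exact (mul_nonneg_iff_of_pos_left (hfpos x hx)).mp h1
  have hqz : ∀ z : ℂ, ‖z‖ ≤ 1 → (q.map (algebraMap ℝ ℂ)).eval z ≠ 0 := by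
    intro z hz1
    have := hz z hz1
    rw [hpq, Polynomial.map_mul, eval_mul] at this
    exact right_ne_zero_of_mul this
  obtain ⟨Aq, hAq1, hAq2, hAq3⟩ := IH q.natDegree (by omega) q rfl hqpos hqz
  obtain ⟨Af, hAf1, hAf2, hAf3⟩ := hrep
  refine ⟨Af * Aq, coeff_mul_nonneg hAf1 hAq1, ?_, ?_⟩
  · exact le_trans natDegree_mul_le (by omega)
  · rw [hpq, hAf3, hAq3, T_mul hAf2 hAq2, ← hnd]

lemma key : ∀ (n : ℕ) (p : ℝ[X]), p.natDegree = n →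
    (∀ x ∈ Set.Icc (-1 : ℝ) 1, 0 ≤ p.eval x) →
    (∀ z : ℂ, ‖z‖ ≤ 1 → (p.map (algebraMap ℝ ℂ)).eval z ≠ 0) →
    ∃ A : ℝ[X], (∀ k, 0 ≤ A.coeff k) ∧ A.natDegree ≤ n ∧ p = T n A := by
  intro n
  induction n using Nat.strong_induction_on with
  | _ n IH =>
    intro p hdeg hpos hz
    have hp0 : p ≠ 0 := p_ne_zero hz
    rcases Nat.eq_zero_or_pos n with hn | hn
    · subst hn
      refine ⟨C (p.coeff 0), ?_, by simp, ?_⟩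
      · intro k
        match k with
        | 0 =>
          simp only [coeff_C_zero]
          rw [Polynomial.coeff_zero_eq_eval_zero]
          exact hpos 0 (by norm_num)
        | (k+1) => simp [coeff_C]
      · rw [eq_C_of_natDegree_eq_zero hdeg]
        simp [T, coeff_C]
    · -- find a complex root
      have hinj : Function.Injective (algebraMap ℝ ℂ) := (algebraMap ℝ ℂ).injective
      have hmapdeg : (p.map (algebraMap ℝ ℂ)).natDegree = n := by
        rw [natDegree_map_eq_of_injective hinj, hdeg]
      have hmapne : p.map (algebraMap ℝ ℂ) ≠ 0 := by
        intro h; rw [h] at hmapdeg; simp at hmapdeg; omega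
      obtain ⟨z, hzroot⟩ := Complex.exists_root
        (natDegree_pos_iff_degree_pos.mp (by omega : 0 < (p.map (algebraMap ℝ ℂ)).natDegree))
      have hzroot : (p.map (algebraMap ℝ ℂ)).eval z = 0 := hzroot
      have habs : 1 < ‖z‖ := by
        by_contra h
        exact hz z (le_of_not_gt h) hzroot
      by_cases him : z.im = 0
      · -- real root
        have hzr : ((z.re : ℝ) : ℂ) = z := Complex.ext (by simp) (by simp [him])
        have hroot : p.eval z.re = 0 := by
          apply hinj
          rw [map_zero, ← Polynomial.eval₂_at_apply, ← Polynomial.eval_map]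
          rw [show (algebraMap ℝ ℂ) z.re = z from hzr]
          exact hzroot
        have hdvd0 : X - C z.re ∣ p := dvd_iff_isRoot.mpr hroot
        have hr : 1 < |z.re| := by rwa [← Real.norm_eq_abs, ← Complex.norm_real, hzr]
        rcases lt_abs.mp hr with hr1 | hr1
        · -- z.re > 1 : use f = C r - X
          have hdvd : C z.re - X ∣ p := by
            have h := (neg_dvd (α := ℝ[X])).mpr hdvd0
            rwa [neg_sub] at h
          refine combine hdeg hpos hz hdvd ?_ one_pos ?_ ?_ (repLinPos hr1) IH
          · rw [show C z.re - X = -(X - C z.re) from by ring, natDegree_neg, natDegree_X_sub_C]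
          · intro x hx
            simp only [eval_sub, eval_C, eval_X]
            have := hx.2
            linarith
          · intro w hw h
            simp only [Polynomial.map_sub, map_C, map_X, eval_sub, eval_C, eval_X,
              sub_eq_zero] at h
            have hwz : w = z := by rw [← h, show (algebraMap ℝ ℂ) z.re = ((z.re:ℝ):ℂ) from rfl, hzr]
            rw [hwz] at hw
            linarith
        · -- z.re < -1 : use f = X - C r
          have hr1' : z.re < -1 := by linarith
          refine combine hdeg hpos hz hdvd0 (natDegree_X_sub_C z.re) one_pos ?_ ?_ (repLinNeg hr1') IH
          · intro x hx
            simp only [eval_sub, eval_C, eval_X]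
            have := hx.1
            linarith
          · intro w hw h
            simp only [Polynomial.map_sub, map_C, map_X, eval_sub, eval_C, eval_X,
              sub_eq_zero] at h
            have hwz : w = z := by rw [h, show (algebraMap ℝ ℂ) z.re = ((z.re:ℝ):ℂ) from rfl, hzr]
            rw [hwz] at hw
            linarith
      · -- complex root; quadratic factor
        set f : ℝ[X] := X^2 - C (2*z.re) * X + C (Complex.normSq z) with hfdef
        have hmap : f.map (algebraMap ℝ ℂ) = (X - C z) * (X - C (starRingEnd ℂ z)) := by
          have e1 : ((2*z.re : ℝ) : ℂ) = z + (starRingEnd ℂ) z := by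
            rw [Complex.add_conj]
          have e2 : ((Complex.normSq z : ℝ) : ℂ) = z * (starRingEnd ℂ) z := by
            rw [Complex.mul_conj]
          simp only [hfdef, Polynomial.map_add, Polynomial.map_sub, Polynomial.map_mul,
            Polynomial.map_pow, map_C, map_X]
          rw [show (algebraMap ℝ ℂ) (2*z.re) = ((2*z.re : ℝ) : ℂ) from rfl,
            show (algebraMap ℝ ℂ) (Complex.normSq z) = ((Complex.normSq z : ℝ) : ℂ) from rfl,
            e1, e2]
          simp only [map_add, map_mul]
          ring
        have hconjroot : (p.map (algebraMap ℝ ℂ)).eval ((starRingEnd ℂ) z) = 0 := by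
          have h1 : (aeval z) p = 0 := by rwa [aeval_def, ← eval_map]
          have h2 := Polynomial.aeval_conj p z
          rw [h1, map_zero] at h2
          rwa [aeval_def, ← eval_map] at h2
        have hne : z ≠ (starRingEnd ℂ) z := by
          intro h
          exact him (Complex.conj_eq_iff_im.mp h.symm)
        have hcop : IsCoprime (X - C z) (X - C ((starRingEnd ℂ) z)) :=
          Polynomial.isCoprime_X_sub_C_of_isUnit_sub
            (isUnit_iff_ne_zero.mpr (sub_ne_zero.mpr hne))
        have hdvdC : f.map (algebraMap ℝ ℂ) ∣ p.map (algebraMap ℝ ℂ) := by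
          rw [hmap]
          exact hcop.mul_dvd (dvd_iff_isRoot.mpr hzroot) (dvd_iff_isRoot.mpr hconjroot)
        have hmonic : f.Monic := by
          unfold Monic
          unfold leadingCoeff
          rw [show f.natDegree = 2 from by unfold f; compute_degree!]
          unfold f
          simp [coeff_add, coeff_C, coeff_C_mul, coeff_X, coeff_X_pow]
        have hdvd : f ∣ p := (Polynomial.map_dvd_map (algebraMap ℝ ℂ) hinj hmonic).mp hdvdC
        have hfd : f.natDegree = 2 := by unfold f; compute_degree!
        have hnsq : Complex.normSq z = z.re^2 + z.im^2 := by
          rw [Complex.normSq_apply]; ring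
        have hsq : 1 < Complex.normSq z := by
          have := Complex.sq_norm z
          nlinarith
        refine combine hdeg hpos hz hdvd hfd two_pos ?_ ?_ ?_ IH
        · intro x hx
          simp only [hfdef, eval_add, eval_sub, eval_mul, eval_pow, eval_C, eval_X]
          have himsq : 0 < z.im^2 := by positivity
          nlinarith [sq_nonneg (x - z.re)]
        · intro w hw h
          rw [hmap, eval_mul] at h
          rcases mul_eq_zero.mp h with h1 | h1
          · simp only [eval_sub, eval_C, eval_X, sub_eq_zero] at h1
            rw [h1] at hw; linarith
          · simp only [eval_sub, eval_C, eval_X, sub_eq_zero] at h1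
            rw [h1] at hw
            rw [Complex.norm_conj] at hw
            linarith
        · exact repQuad (le_of_lt hsq) (by nlinarith [sq_nonneg (1 - z.re), sq_nonneg z.im])
            (by nlinarith [sq_nonneg (1 + z.re), sq_nonneg z.im])

theorem lorentz_degree_eq_degree (p : Polynomial ℝ)
    (hpos : ∀ x ∈ Set.Icc (-1 : ℝ) 1, 0 ≤ p.eval x)
    (hz : ∀ z : ℂ, ‖z‖ ≤ 1 → (p.map (algebraMap ℝ ℂ)).eval z ≠ 0) :
    ∃ a : Fin (p.natDegree + 1) → ℝ, (∀ k, 0 ≤ a k) ∧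
      p = ∑ k : Fin (p.natDegree + 1),
        C (a k) * (1 - X) ^ (k : ℕ) * (1 + X) ^ (p.natDegree - (k : ℕ)) := by
  obtain ⟨A, hA1, hA2, hA3⟩ := key p.natDegree p rfl hpos hz
  refine ⟨fun k => A.coeff k, fun k => hA1 k, ?_⟩
  have hs : (∑ k : Fin (p.natDegree + 1),
      C (A.coeff (k:ℕ)) * (1 - X) ^ (k : ℕ) * (1 + X) ^ (p.natDegree - (k : ℕ)))
      = T p.natDegree A := by
    rw [T, ← Fin.sum_univ_eq_sum_range]
  rw [hs]
  exact hA3
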